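/- Let p : ℝ → (1,∞) be a measurable function in the class LH with 1 < p⁻ ≤ p⁺ < ∞. Suppose U : ℂ₊ → ℂ is harmonic on the upper half-plane ℂ₊ = {z ∈ ℂ : Im z > 0} and satisfies sup_{y>0} ∫_ℝ |U(x+iy)|^{p(x)} dx < ∞. Then for every k > 0, U is bounded on the closed half-plane H_k = {z ∈ ℂ : Im z ≥ k}, i.e., there exists B > 0 with |U(z)| ≤ B for all z with Im z ≥ k. -/

import Mathlib

open MeasureTheory Complex
open scoped ENNReal

/-- `f` is harmonic on the set `s ⊆ ℂ`: it is twice continuously (real-)differentiable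
on `s` and its Laplacian vanishes on `s`. -/
def HarmonicOnSet (f : ℂ → ℂ) (s : Set ℂ) : Prop :=
  ContDiffOn ℝ 2 f s ∧ ∀ z ∈ s,
    fderiv ℝ (fun w => fderiv ℝ f w 1) z 1
      + fderiv ℝ (fun w => fderiv ℝ f w Complex.I) z Complex.I = 0

lemma hasFDerivAt_complexify {f : ℂ → ℂ} {L : ℂ →L[ℂ] ℂ} {z : ℂ}
    (h : HasFDerivAt f (L.restrictScalars ℝ) z) : HasFDerivAt f L z := by
  exact hasFDerivAt_of_restrictScalars (𝕜 := ℝ) h rfl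

/-- an ℝ-linear CLM ℂ → ℂ sending I to I * (its value at 1) is multiplication by value at 1 -/
lemma clm_eq_mul {D : ℂ →L[ℝ] ℂ} (hD : D I = I * D 1) :
    (((D 1) • (1 : ℂ →L[ℂ] ℂ)).restrictScalars ℝ) = D := by
  ext v
  have hv : D v = v.re • D 1 + v.im • D I := by
    conv_lhs => rw [show v = (v.re : ℝ) • (1 : ℂ) + (v.im : ℝ) • I by
      simp [Complex.real_smul, Complex.re_add_im]]
    rw [D.map_add, D.map_smul, D.map_smul]
  simp only [ContinuousLinearMap.coe_restrictScalars', ContinuousLinearMap.smul_apply,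
    ContinuousLinearMap.one_apply, smul_eq_mul]
  rw [hv, hD]
  simp only [Complex.real_smul]
  nth_rewrite 1 [← Complex.re_add_im v]
  ring

lemma holo_wirtinger {f : ℂ → ℂ} {s : Set ℂ} (hs : IsOpen s) (hf : HarmonicOnSet f s) :
    DifferentiableOn ℂ (fun z => fderiv ℝ f z 1 - I * fderiv ℝ f z I) s := by
  intro z hz
  have hf2 : ContDiffAt ℝ 2 f z := (hf.1.contDiffAt (hs.mem_nhds hz))
  have hdiff : ∀ᶠ w in nhds z, HasFDerivAt f (fderiv ℝ f w) w := by
    filter_upwards [hs.mem_nhds hz] with w hw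
    exact ((hf.1.differentiableOn two_ne_zero).differentiableAt (hs.mem_nhds hw)).hasFDerivAt
  have hf' : ContDiffAt ℝ 1 (fderiv ℝ f) z := hf2.fderiv_right (by norm_num)
  set f'' := fderiv ℝ (fderiv ℝ f) z with hf''def
  have hd2 : HasFDerivAt (fderiv ℝ f) f'' z :=
    (hf'.differentiableAt one_ne_zero).hasFDerivAt
  have hsymm : ∀ v w : ℂ, f'' v w = f'' w v :=
    second_derivative_symmetric_of_eventually_of_real hdiff hd2
  -- laplacian
  have happ : ∀ v : ℂ, fderiv ℝ (fun w => fderiv ℝ f w v) z = (ContinuousLinearMap.apply ℝ ℂ v).comp f'' := by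
    intro v
    exact (((ContinuousLinearMap.apply ℝ ℂ v).hasFDerivAt).comp z hd2).fderiv
  have hlap : f'' 1 1 + f'' I I = 0 := by
    have := hf.2 z hz
    rw [happ 1, happ I] at this
    simpa using this
  -- derivative of g
  set A : (ℂ →L[ℝ] ℂ) →L[ℝ] ℂ :=
    (ContinuousLinearMap.apply ℝ ℂ (1:ℂ))
      - ((ContinuousLinearMap.mul ℝ ℂ) I).comp (ContinuousLinearMap.apply ℝ ℂ I) with hA
  have hg : HasFDerivAt (fun z => fderiv ℝ f z 1 - I * fderiv ℝ f z I) (A.comp f'') z := by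
    have := A.hasFDerivAt.comp z hd2
    exact this
  set D := A.comp f'' with hD
  have hD1 : ∀ v, D v = f'' v 1 - I * f'' v I := by intro v; simp [hD, hA]
  have hCR : D I = I * D 1 := by
    rw [hD1, hD1, hsymm I 1]
    have h0 : I * (f'' 1 1 + f'' I I) = 0 := by rw [hlap]; ring
    linear_combination ((f'' 1) I : ℂ) * Complex.I_mul_I - h0
  exact (hasFDerivAt_complexify ((clm_eq_mul hCR) ▸ hg)).differentiableAt.differentiableWithinAt

lemma harmonic_conj {f : ℂ → ℂ} {s : Set ℂ} (hs : IsOpen s) (hf : HarmonicOnSet f s) :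
    HarmonicOnSet (fun z => (starRingEnd ℂ) (f z)) s := by
  have hc : ContDiff ℝ 2 (fun z : ℂ => (starRingEnd ℂ) z) :=
    Complex.conjCLE.toContinuousLinearMap.contDiff
  constructor
  · exact hc.comp_contDiffOn hf.1
  · intro z hz
    have hfd : ∀ w ∈ s, DifferentiableAt ℝ f w := fun w hw =>
      (hf.1.differentiableOn two_ne_zero).differentiableAt (hs.mem_nhds hw)
    have key : ∀ v : ℂ, (fun w => fderiv ℝ (fun x => (starRingEnd ℂ) (f x)) w v)
        =ᶠ[nhds z] (fun w => (starRingEnd ℂ) (fderiv ℝ f w v)) := by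
      intro v
      filter_upwards [hs.mem_nhds hz] with w hw
      have h1 : HasFDerivAt (fun x => (starRingEnd ℂ) (f x))
          (Complex.conjCLE.toContinuousLinearMap.comp (fderiv ℝ f w)) w :=
        (Complex.conjCLE.toContinuousLinearMap.hasFDerivAt).comp w (hfd w hw).hasFDerivAt
      rw [h1.fderiv]
      rfl
    have hder : ∀ v : ℂ, DifferentiableAt ℝ (fun w => fderiv ℝ f w v) z := by
      intro v
      have hf' : ContDiffAt ℝ 1 (fderiv ℝ f) z :=
        (hf.1.contDiffAt (hs.mem_nhds hz)).fderiv_right (by norm_num)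
      exact (ContinuousLinearMap.apply ℝ ℂ v).differentiableAt.comp z
        (hf'.differentiableAt one_ne_zero)
    have key2 : ∀ v : ℂ, fderiv ℝ (fun w => fderiv ℝ (fun x => (starRingEnd ℂ) (f x)) w v) z v
        = (starRingEnd ℂ) (fderiv ℝ (fun w => fderiv ℝ f w v) z v) := by
      intro v
      rw [Filter.EventuallyEq.fderiv_eq (key v)]
      have h2 : HasFDerivAt (fun w => (starRingEnd ℂ) (fderiv ℝ f w v))
          (Complex.conjCLE.toContinuousLinearMap.comp (fderiv ℝ (fun w => fderiv ℝ f w v) z)) z :=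
        (Complex.conjCLE.toContinuousLinearMap.hasFDerivAt).comp z ((hder v).hasFDerivAt)
      rw [h2.fderiv]
      rfl
    rw [key2 1, key2 I, ← map_add, hf.2 z hz, map_zero]

lemma fderiv_conj_apply {f : ℂ → ℂ} {z : ℂ} (h : DifferentiableAt ℝ f z) (v : ℂ) :
    fderiv ℝ (fun x => (starRingEnd ℂ) (f x)) z v = (starRingEnd ℂ) (fderiv ℝ f z v) := by
  have h1 : HasFDerivAt (fun x => (starRingEnd ℂ) (f x))
      (Complex.conjCLE.toContinuousLinearMap.comp (fderiv ℝ f z)) z :=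
    (Complex.conjCLE.toContinuousLinearMap.hasFDerivAt).comp z h.hasFDerivAt
  rw [h1.fderiv]; rfl

lemma intervalIntegral_conj {f : ℝ → ℂ} {a b : ℝ} :
    (∫ θ in a..b, (starRingEnd ℂ) (f θ)) = (starRingEnd ℂ) (∫ θ in a..b, f θ) := by
  simp only [intervalIntegral]
  rw [integral_conj, integral_conj, ← map_sub]

lemma conj_exp_mul_I (θ : ℝ) :
    (starRingEnd ℂ) (Complex.exp ((θ:ℂ) * I)) = Complex.exp (-((θ:ℂ) * I)) := by
  rw [← Complex.exp_conj]
  congr 1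
  simp [Complex.conj_I]

lemma exp_neg_mul_I (θ : ℝ) :
    Complex.exp (-((θ:ℂ) * I)) = (Real.cos θ : ℂ) - (Real.sin θ : ℂ) * I := by
  have h : -((θ:ℂ) * I) = ((-θ : ℝ) : ℂ) * I := by push_cast; ring
  rw [h, Complex.exp_mul_I, ← Complex.ofReal_cos, ← Complex.ofReal_sin,
    Real.cos_neg, Real.sin_neg]
  push_cast
  ring

lemma exp_mul_I_eq (θ : ℝ) :
    Complex.exp ((θ:ℂ) * I) = (Real.cos θ : ℂ) + (Real.sin θ : ℂ) * I := by
  rw [Complex.exp_mul_I, ← Complex.ofReal_cos, ← Complex.ofReal_sin]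

lemma clm_exp_eval (D : ℂ →L[ℝ] ℂ) (θ : ℝ) :
    D (Complex.exp ((θ:ℂ) * I)) =
      ((D 1 - I * D I) * Complex.exp ((θ:ℂ) * I)
        + (D 1 + I * D I) * Complex.exp (-((θ:ℂ) * I))) / 2 := by
  have hD : D (Complex.exp ((θ:ℂ) * I)) = (Real.cos θ : ℂ) * D 1 + (Real.sin θ : ℂ) * D I := by
    have h : Complex.exp ((θ:ℂ) * I) = (Real.cos θ : ℝ) • (1:ℂ) + (Real.sin θ : ℝ) • I := by
      rw [exp_mul_I_eq]
      simp [Complex.real_smul]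
    rw [h, map_add, D.map_smul, D.map_smul, Complex.real_smul, Complex.real_smul]
  rw [hD, exp_mul_I_eq, exp_neg_mul_I]
  linear_combination ((Real.sin θ : ℂ) * D I) * Complex.I_mul_I

lemma mvp {f : ℂ → ℂ} {s : Set ℂ} (hs : IsOpen s) (hf : HarmonicOnSet f s) {c : ℂ} {R : ℝ}
    (hR : 0 < R) (hsub : Metric.closedBall c R ⊆ s) :
    (∫ θ in (0:ℝ)..(2*Real.pi), f (c + (R:ℂ) * Complex.exp ((θ:ℂ) * I)))
      = (2*Real.pi : ℝ) • f c := by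
  obtain ⟨ε, hε, hthick⟩ :=
    (isCompact_closedBall c R).exists_cthickening_subset_open hs hsub
  have hsub2 : Metric.closedBall c (R + ε) ⊆ s := by
    rw [add_comm, ← cthickening_closedBall hε.le hR.le c]
    exact hthick
  have hballmem : ∀ r : ℝ, |r| ≤ R + ε → ∀ θ : ℝ,
      c + (r:ℂ) * Complex.exp ((θ:ℂ)*I) ∈ Metric.closedBall c (R + ε) := by
    intro r hr θ
    rw [Metric.mem_closedBall, dist_eq_norm, add_sub_cancel_left, norm_mul,
      Complex.norm_real, Real.norm_eq_abs,
      Complex.norm_exp_ofReal_mul_I, mul_one]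
    exact hr
  have hmem : ∀ r : ℝ, |r| ≤ R + ε → ∀ θ : ℝ, c + (r:ℂ) * Complex.exp ((θ:ℂ)*I) ∈ s :=
    fun r hr θ => hsub2 (hballmem r hr θ)
  have hdf : ∀ z ∈ s, DifferentiableAt ℝ f z := fun z hz =>
    (hf.1.differentiableOn two_ne_zero).differentiableAt (hs.mem_nhds hz)
  have hcf : ContinuousOn f s := hf.1.continuousOn
  have hcf' : ContinuousOn (fderiv ℝ f) s := hf.1.continuousOn_fderiv_of_isOpen hs one_le_two
  obtain ⟨C, hC⟩ := (isCompact_closedBall c (R+ε)).exists_bound_of_continuousOn (hcf'.mono hsub2)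
  have hg : DifferentiableOn ℂ (fun z => fderiv ℝ f z 1 - I * fderiv ℝ f z I) s :=
    holo_wirtinger hs hf
  have hg2 : DifferentiableOn ℂ
      (fun z => (starRingEnd ℂ) (fderiv ℝ f z 1) - I * (starRingEnd ℂ) (fderiv ℝ f z I)) s := by
    have h0 := holo_wirtinger hs (harmonic_conj hs hf)
    apply h0.congr
    intro z hz
    rw [fderiv_conj_apply (hdf z hz), fderiv_conj_apply (hdf z hz)]
  -- curve continuity
  have hγcont : ∀ r : ℝ, Continuous (fun θ : ℝ => c + (r:ℂ) * Complex.exp ((θ:ℂ)*I)) := by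
    intro r
    exact continuous_const.add (continuous_const.mul
      (Complex.continuous_exp.comp (Complex.continuous_ofReal.mul continuous_const)))
  have hexpcont : Continuous (fun θ : ℝ => Complex.exp ((θ:ℂ)*I)) :=
    Complex.continuous_exp.comp (Complex.continuous_ofReal.mul continuous_const)
  -- vanishing lemma
  have hvanish : ∀ (G : ℂ → ℂ), DifferentiableOn ℂ G s → ∀ r : ℝ, 0 ≤ r → r ≤ R →
      (∫ θ in (0:ℝ)..(2*Real.pi), G (c + (r:ℂ) * Complex.exp ((θ:ℂ)*I))
        * Complex.exp ((θ:ℂ)*I)) = 0 := by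
    intro G hG r hr0 hrR
    have hexpint : (∫ θ in (0:ℝ)..(2*Real.pi), Complex.exp ((θ:ℂ)*I)) = 0 := by
      have h1 : ∀ θ : ℝ, Complex.exp ((θ:ℂ)*I) = Complex.exp (I * (θ:ℂ)) := by
        intro θ; rw [mul_comm]
      simp_rw [h1]
      have h2 : Complex.exp (I * ((2*Real.pi : ℝ) : ℂ)) = Complex.exp (I * ((0:ℝ):ℂ)) := by
        push_cast
        rw [show I * (2*(Real.pi:ℂ)) = 2*(Real.pi:ℂ)*I by ring, Complex.exp_two_pi_mul_I,
          mul_zero, Complex.exp_zero]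
      rw [integral_exp_mul_complex Complex.I_ne_zero, h2, sub_self, zero_div]
    rcases eq_or_lt_of_le hr0 with h0 | hpos
    · rw [← h0]
      push_cast
      simp only [zero_mul, add_zero]
      rw [intervalIntegral.integral_const_mul, hexpint, mul_zero]
    · have hcball : Metric.closedBall c r ⊆ s :=
        subset_trans (Metric.closedBall_subset_closedBall hrR) hsub
      have hzero : (∮ z in C(c, r), G z) = 0 :=
        circleIntegral_eq_zero_of_differentiable_on_off_countable hr0 Set.countable_empty
          (hG.continuousOn.mono hcball)
          (fun z hz => hG.differentiableAt
            (hs.mem_nhds (hcball (Metric.ball_subset_closedBall hz.1))))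
      rw [circleIntegral] at hzero
      have heq : ∀ θ : ℝ, deriv (circleMap c r) θ • G (circleMap c r θ)
          = ((r:ℂ) * I) * (G (c + (r:ℂ) * Complex.exp ((θ:ℂ)*I)) * Complex.exp ((θ:ℂ)*I)) := by
        intro θ
        rw [deriv_circleMap]
        have h2 : circleMap c r θ = c + (r:ℂ) * Complex.exp ((θ:ℂ)*I) := rfl
        have h3 : circleMap 0 r θ = (r:ℂ) * Complex.exp ((θ:ℂ)*I) := by
          simp [circleMap]
        rw [h2, h3, smul_eq_mul]
        ring
      rw [intervalIntegral.integral_congr (fun θ _ => heq θ),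
        intervalIntegral.integral_const_mul] at hzero
      rcases mul_eq_zero.1 hzero with h | h
      · exact absurd h (by
          simp only [mul_eq_zero, Complex.I_ne_zero, or_false, Complex.ofReal_eq_zero]
          exact ne_of_gt hpos)
      · exact h
  -- derivative of the circle average
  have hFderiv : ∀ r₀ ∈ Set.Icc (0:ℝ) R, HasDerivAt
      (fun r : ℝ => ∫ θ in (0:ℝ)..(2*Real.pi), f (c + (r:ℂ) * Complex.exp ((θ:ℂ)*I))) 0 r₀ := by
    intro r₀ hr₀
    have hr₀' : |r₀| ≤ R := abs_le.2 ⟨by linarith [hr₀.1, hR.le], hr₀.2⟩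
    have hball : ∀ r ∈ Metric.ball r₀ ε, |r| ≤ R + ε := by
      intro r hr
      rw [Metric.mem_ball, Real.dist_eq] at hr
      have h4 := abs_sub_abs_le_abs_sub r r₀
      linarith
    have hF'contm : ∀ r : ℝ, |r| ≤ R + ε → Continuous
        (fun θ : ℝ => fderiv ℝ f (c + (r:ℂ) * Complex.exp ((θ:ℂ)*I)) (Complex.exp ((θ:ℂ)*I))) := by
      intro r hr
      exact (hcf'.comp_continuous (hγcont r) (fun θ => hmem r hr θ)).clm_apply hexpcont
    have hFcontm : ∀ r : ℝ, |r| ≤ R + ε → Continuous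
        (fun θ : ℝ => f (c + (r:ℂ) * Complex.exp ((θ:ℂ)*I))) := by
      intro r hr
      exact hcf.comp_continuous (hγcont r) (fun θ => hmem r hr θ)
    have key := intervalIntegral.hasDerivAt_integral_of_dominated_loc_of_deriv_le
      (F := fun (r : ℝ) (θ : ℝ) => f (c + (r:ℂ) * Complex.exp ((θ:ℂ)*I)))
      (F' := fun (r : ℝ) (θ : ℝ) =>
        fderiv ℝ f (c + (r:ℂ) * Complex.exp ((θ:ℂ)*I)) (Complex.exp ((θ:ℂ)*I)))
      (a := 0) (b := 2*Real.pi) (x₀ := r₀) (bound := fun _ => C) (μ := volume) (Metric.ball_mem_nhds r₀ hε)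
      ?_ ?_ ?_ ?_ ?_ ?_
    · -- conclude: the integral of F' r₀ is 0
      have hsplit : (∫ θ in (0:ℝ)..(2*Real.pi),
          fderiv ℝ f (c + (r₀:ℂ) * Complex.exp ((θ:ℂ)*I)) (Complex.exp ((θ:ℂ)*I))) = 0 := by
        have heq2 : ∀ θ : ℝ,
            fderiv ℝ f (c + (r₀:ℂ) * Complex.exp ((θ:ℂ)*I)) (Complex.exp ((θ:ℂ)*I))
            = ((fun z => fderiv ℝ f z 1 - I * fderiv ℝ f z I) (c + (r₀:ℂ) * Complex.exp ((θ:ℂ)*I))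
                * Complex.exp ((θ:ℂ)*I)
              + (starRingEnd ℂ) (((fun z => (starRingEnd ℂ) (fderiv ℝ f z 1)
                  - I * (starRingEnd ℂ) (fderiv ℝ f z I)) (c + (r₀:ℂ) * Complex.exp ((θ:ℂ)*I)))
                  * Complex.exp ((θ:ℂ)*I))) / 2 := by
          intro θ
          rw [clm_exp_eval]
          simp only [map_sub, map_mul, Complex.conj_conj, Complex.conj_I, conj_exp_mul_I]
          ring
        rw [intervalIntegral.integral_congr (fun θ _ => heq2 θ)]
        have hint1 : IntervalIntegrable (fun θ : ℝ =>
            (fun z => fderiv ℝ f z 1 - I * fderiv ℝ f z I) (c + (r₀:ℂ) * Complex.exp ((θ:ℂ)*I))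
              * Complex.exp ((θ:ℂ)*I)) volume 0 (2*Real.pi) := by
          apply Continuous.intervalIntegrable
          exact ((hg.continuousOn.comp_continuous (hγcont r₀)
            (fun θ => hmem r₀ (le_trans hr₀' (by linarith)) θ)).mul hexpcont)
        have hint2 : IntervalIntegrable (fun θ : ℝ =>
            (starRingEnd ℂ) (((fun z => (starRingEnd ℂ) (fderiv ℝ f z 1)
              - I * (starRingEnd ℂ) (fderiv ℝ f z I)) (c + (r₀:ℂ) * Complex.exp ((θ:ℂ)*I)))
              * Complex.exp ((θ:ℂ)*I))) volume 0 (2*Real.pi) := by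
          apply Continuous.intervalIntegrable
          exact Complex.continuous_conj.comp (((hg2.continuousOn.comp_continuous (hγcont r₀)
            (fun θ => hmem r₀ (le_trans hr₀' (by linarith)) θ)).mul hexpcont))
        rw [intervalIntegral.integral_div, intervalIntegral.integral_add hint1 hint2,
          hvanish _ hg r₀ hr₀.1 hr₀.2, intervalIntegral_conj,
          hvanish _ hg2 r₀ hr₀.1 hr₀.2]
        simp
      rw [hsplit] at key
      exact key.2
    · -- measurability of F r for r near r₀
      filter_upwards [Metric.ball_mem_nhds r₀ hε] with r hr
      exact ((hFcontm r (hball r hr)).aestronglyMeasurable).restrict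
    · exact (hFcontm r₀ (le_trans hr₀' (by linarith))).intervalIntegrable 0 (2*Real.pi)
    · exact ((hF'contm r₀ (le_trans hr₀' (by linarith))).aestronglyMeasurable).restrict
    · -- bound
      apply Filter.Eventually.of_forall
      intro t _ r hr
      calc ‖fderiv ℝ f (c + (r:ℂ) * Complex.exp ((t:ℂ)*I)) (Complex.exp ((t:ℂ)*I))‖
          ≤ ‖fderiv ℝ f (c + (r:ℂ) * Complex.exp ((t:ℂ)*I))‖ * ‖Complex.exp ((t:ℂ)*I)‖ :=
            ContinuousLinearMap.le_opNorm _ _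
        _ ≤ C := by
            rw [Complex.norm_exp_ofReal_mul_I, mul_one]
            exact hC _ (hballmem r (hball r hr) t)
    · exact intervalIntegrable_const
    · -- differentiability in r
      apply Filter.Eventually.of_forall
      intro t _ r hr
      have h1 : HasDerivAt (fun r : ℝ => c + (r:ℂ) * Complex.exp ((t:ℂ)*I))
          (Complex.exp ((t:ℂ)*I)) r := by
        have h2 : HasDerivAt (fun r : ℝ => (r:ℂ)) 1 r := by
          exact Complex.ofRealCLM.hasDerivAt (x := r)
        simpa using (h2.mul_const (Complex.exp ((t:ℂ)*I))).const_add c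
      exact ((hdf _ (hmem r (hball r hr) t)).hasFDerivAt).comp_hasDerivAt r h1
  -- constancy
  have hconst := constant_of_has_deriv_right_zero
    (f := fun r : ℝ => ∫ θ in (0:ℝ)..(2*Real.pi), f (c + (r:ℂ) * Complex.exp ((θ:ℂ)*I)))
    (a := 0) (b := R)
    (fun r hr => ((hFderiv r hr).continuousAt.continuousWithinAt))
    (fun r hr => ((hFderiv r (Set.Ico_subset_Icc_self hr)).hasDerivWithinAt))
  have hRR := hconst R (Set.right_mem_Icc.2 hR.le)
  rw [hRR]
  push_cast
  simp only [zero_mul, add_zero]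
  rw [intervalIntegral.integral_const]
  norm_num

lemma ofReal_le_one_add_rpow {x : ℝ≥0∞} {e : ℝ} (he : 1 ≤ e) : x ≤ 1 + x ^ e := by
  rcases le_or_gt x 1 with h | h
  · exact h.trans (le_add_right le_rfl)
  · calc x = x ^ (1:ℝ) := (ENNReal.rpow_one x).symm
      _ ≤ x ^ e := ENNReal.rpow_le_rpow_of_exponent_le h.le he
      _ ≤ 1 + x ^ e := le_add_self

lemma isOpenHalfPlane : IsOpen {z : ℂ | 0 < z.im} := by
  exact isOpen_lt continuous_const Complex.continuous_im

lemma stepA {U : ℂ → ℂ} (hU : HarmonicOnSet U {z : ℂ | 0 < z.im}) {c : ℂ} {r : ℝ}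
    (hr0 : 0 < r) (him : 2*r ≤ c.im) :
    2*Real.pi * ‖U c‖
      ≤ ∫ θ in Set.Icc (-Real.pi) Real.pi, ‖U (c + (r:ℂ) * Complex.exp ((θ:ℂ)*I))‖ := by
  have hsub : Metric.closedBall c r ⊆ {z : ℂ | 0 < z.im} := by
    intro z hz
    rw [Metric.mem_closedBall, dist_eq_norm] at hz
    have h1 : |(z - c).im| ≤ r := le_trans (Complex.abs_im_le_norm _) hz
    have h2 : (z - c).im = z.im - c.im := by simp [Complex.sub_im]
    have := abs_le.1 h1
    simp only [Set.mem_setOf_eq]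
    rw [h2] at this
    linarith
  have hmvp := mvp isOpenHalfPlane hU hr0 hsub
  have h1 : 2*Real.pi * ‖U c‖ = ‖(2*Real.pi : ℝ) • U c‖ := by
    rw [norm_smul, Real.norm_eq_abs, abs_of_pos (by positivity : (0:ℝ) < 2*Real.pi)]
  rw [h1, ← hmvp]
  calc ‖∫ θ in (0:ℝ)..(2*Real.pi), U (c + (r:ℂ) * Complex.exp ((θ:ℂ)*I))‖
      ≤ ∫ θ in (0:ℝ)..(2*Real.pi), ‖U (c + (r:ℂ) * Complex.exp ((θ:ℂ)*I))‖ :=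
        intervalIntegral.norm_integral_le_integral_norm (by positivity)
    _ = ∫ θ in (-Real.pi)..(-Real.pi + 2*Real.pi),
          ‖U (c + (r:ℂ) * Complex.exp ((θ:ℂ)*I))‖ := by
        have hper : Function.Periodic
            (fun θ : ℝ => ‖U (c + (r:ℂ) * Complex.exp ((θ:ℂ)*I))‖) (2*Real.pi) := by
          intro θ
          have : ((θ + 2*Real.pi : ℝ) : ℂ) * I = (θ:ℂ)*I + 2*Real.pi*I := by push_cast; ring
          simp only [this, Complex.exp_add, Complex.exp_two_pi_mul_I, mul_one]
        have h2 := hper.intervalIntegral_add_eq 0 (-Real.pi)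
        rw [zero_add] at h2
        exact h2
    _ = ∫ θ in Set.Icc (-Real.pi) Real.pi,
          ‖U (c + (r:ℂ) * Complex.exp ((θ:ℂ)*I))‖ := by
        rw [show -Real.pi + 2*Real.pi = Real.pi by ring,
          intervalIntegral.integral_of_le (by linarith [Real.pi_pos]),
          ← integral_Icc_eq_integral_Ioc]

lemma main_bound (p : ℝ → ℝ) (hmeas : Measurable p) {a b : ℝ} (ha : 1 < a)
    (hab : ∀ x : ℝ, a ≤ p x ∧ p x ≤ b)
    (U : ℂ → ℂ) (hU : HarmonicOnSet U {z : ℂ | 0 < z.im})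
    (S : ℝ≥0∞)
    (hS : S ≠ ⊤)
    (hbd : ∀ y : ℝ, 0 < y →
      (∫⁻ x : ℝ, ENNReal.ofReal (‖U ((x:ℂ) + (y:ℂ) * I)‖) ^ (p x)) ≤ S)
    {R : ℝ} (hR : 0 < R) {c : ℂ} (hc : 2*R ≤ c.im) :
    Real.pi * R * ‖U c‖
      ≤ (2/R) * (ENNReal.ofReal (2*R) * ENNReal.ofReal (2*R)
          + ENNReal.ofReal (2*R) * S).toReal := by
  have hcim : R < c.im := by linarith
  have hUcont : ContinuousOn U {z : ℂ | 0 < z.im} := hU.1.continuousOn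
  set D := Set.Icc (R/2) R with hD
  set Θ := Set.Icc (-Real.pi) Real.pi with hΘ
  set G : ℝ × ℝ → ℝ := fun q => ‖U (c + (q.1:ℂ) * Complex.exp ((q.2:ℂ)*I))‖ with hG
  set u : ℂ → ℝ := fun w => ‖U (c + w)‖ with hu
  have hball_im : ∀ w : ℂ, ‖w‖ ≤ R → 0 < (c + w).im := by
    intro w hw
    have h1 : |w.im| ≤ R := le_trans (Complex.abs_im_le_norm w) hw
    have h2 := abs_le.1 h1
    simp only [Complex.add_im]
    linarith
  have habs_exp : ∀ (r θ : ℝ), ‖(r:ℂ) * Complex.exp ((θ:ℂ)*I)‖ = |r| := by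
    intro r θ
    rw [norm_mul, Complex.norm_real, Real.norm_eq_abs, Complex.norm_exp_ofReal_mul_I, mul_one]
  have hmemP : ∀ q : ℝ × ℝ, q ∈ D ×ˢ Θ →
      (c + (q.1:ℂ) * Complex.exp ((q.2:ℂ)*I)) ∈ {z : ℂ | 0 < z.im} := by
    intro q hq
    apply hball_im
    rw [habs_exp, abs_of_pos (lt_of_lt_of_le (half_pos hR) hq.1.1)]
    exact hq.1.2
  have hγ2 : Continuous (fun q : ℝ × ℝ => c + (q.1:ℂ) * Complex.exp ((q.2:ℂ)*I)) := by
    apply continuous_const.add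
    exact (Complex.continuous_ofReal.comp continuous_fst).mul
      (Complex.continuous_exp.comp ((Complex.continuous_ofReal.comp continuous_snd).mul
        continuous_const))
  have hGcont : ContinuousOn G (D ×ˢ Θ) :=
    (hUcont.comp hγ2.continuousOn hmemP).norm
  have hPcompact : IsCompact (D ×ˢ Θ) := isCompact_Icc.prod isCompact_Icc
  have hPmeas : MeasurableSet (D ×ˢ Θ) := measurableSet_Icc.prod measurableSet_Icc
  have hGint : IntegrableOn G (D ×ˢ Θ) := hGcont.integrableOn_compact hPcompact
  have hG1int : IntegrableOn (fun q : ℝ × ℝ => q.1 * G q) (D ×ˢ Θ) :=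
    ((continuous_fst.continuousOn).mul hGcont).integrableOn_compact hPcompact
  have hrestr : (volume : Measure (ℝ × ℝ)).restrict (D ×ˢ Θ)
      = ((volume : Measure ℝ).restrict D).prod ((volume : Measure ℝ).restrict Θ) := by
    rw [Measure.prod_restrict, ← Measure.volume_eq_prod]
  have hGprod : Integrable (fun q : ℝ × ℝ => G (q.1, q.2))
      (((volume : Measure ℝ).restrict D).prod ((volume : Measure ℝ).restrict Θ)) := by
    rw [← hrestr]
    exact hGint
  -- step 1
  have h1 : (R/2) * (2*Real.pi * ‖U c‖) ≤ ∫ r in D, (∫ θ in Θ, G (r, θ)) := by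
    have hint : IntegrableOn (fun r => ∫ θ in Θ, G (r, θ)) D := hGprod.integral_prod_left
    have hmono := setIntegral_mono_on
      (integrableOn_const (by rw [hD, Real.volume_Icc]; exact ENNReal.ofReal_ne_top))
      hint measurableSet_Icc
      (fun r hr => stepA hU (lt_of_lt_of_le (half_pos hR) hr.1)
        (by linarith [hr.2]))
    rwa [setIntegral_const, smul_eq_mul, hD, Real.volume_real_Icc_of_le (by linarith),
      show R - R/2 = R/2 by ring] at hmono
  have h2 : (∫ r in D, (∫ θ in Θ, G (r, θ))) = ∫ q in D ×ˢ Θ, G q := by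
    have := integral_integral (f := fun (x : ℝ) (y : ℝ) => G (x, y)) hGprod
    rw [this]
    rw [show (∫ q in D ×ˢ Θ, G q) = ∫ q, G q ∂((volume : Measure (ℝ×ℝ)).restrict (D ×ˢ Θ)) from rfl,
      hrestr]
  -- step 3
  have h3 : (∫ q in D ×ˢ Θ, G q) ≤ (2/R) * ∫ q in D ×ˢ Θ, q.1 * G q := by
    rw [← integral_const_mul]
    apply setIntegral_mono_on hGint (hG1int.const_mul _) hPmeas
    intro q hq
    have hq1 : R/2 ≤ q.1 := hq.1.1
    have hG0 : 0 ≤ G q := norm_nonneg _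
    have hge : 1 ≤ 2/R * q.1 := by
      rw [div_mul_eq_mul_div, le_div_iff₀ hR]; linarith
    calc G q = 1 * G q := (one_mul _).symm
      _ ≤ (2/R * q.1) * G q := mul_le_mul_of_nonneg_right hge hG0
      _ = 2/R * (q.1 * G q) := by ring
  -- step 4: polar coordinates
  set P' := Set.Ioo (R/2) R ×ˢ Set.Ioo (-Real.pi) Real.pi with hP'
  have hP'sub : P' ⊆ Complex.polarCoord.target := by
    rw [Complex.polarCoord_target]
    rintro q ⟨hq1, hq2⟩
    exact ⟨lt_trans (half_pos hR) hq1.1, hq2⟩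
  have hP'P : P' ⊆ D ×ˢ Θ := by
    rintro q ⟨hq1, hq2⟩
    exact ⟨⟨hq1.1.le, hq1.2.le⟩, ⟨hq2.1.le, hq2.2.le⟩⟩
  have haeeq : (D ×ˢ Θ : Set (ℝ × ℝ)) =ᵐ[volume] P' := by
    rw [MeasureTheory.ae_eq_set]
    constructor
    · apply measure_mono_null (t := (({R/2, R} : Set ℝ) ×ˢ (Set.univ : Set ℝ))
        ∪ ((Set.univ : Set ℝ) ×ˢ ({-Real.pi, Real.pi} : Set ℝ)))
      · rintro q ⟨⟨⟨hq1a, hq1b⟩, hq2a, hq2b⟩, hnq⟩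
        by_cases h1 : q.1 = R/2 ∨ q.1 = R
        · exact Or.inl ⟨h1, Set.mem_univ _⟩
        · push_neg at h1
          right
          refine ⟨Set.mem_univ _, ?_⟩
          by_contra h2
          simp only [Set.mem_insert_iff, Set.mem_singleton_iff] at h2
          push_neg at h2
          exact hnq ⟨⟨lt_of_le_of_ne hq1a (Ne.symm h1.1), lt_of_le_of_ne hq1b h1.2⟩,
            ⟨lt_of_le_of_ne hq2a (Ne.symm h2.1), lt_of_le_of_ne hq2b h2.2⟩⟩
      · apply measure_union_null
        · rw [Measure.volume_eq_prod, Measure.prod_prod,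
            Set.Countable.measure_zero (Set.countable_insert.2 (Set.countable_singleton _)) _,
            zero_mul]
        · rw [Measure.volume_eq_prod, Measure.prod_prod,
            Set.Countable.measure_zero (Set.countable_insert.2 (Set.countable_singleton _)) _,
            mul_zero]
    · rw [Set.diff_eq_empty.2 hP'P]
      exact measure_empty
  have h4a : (∫ q in D ×ˢ Θ, q.1 * G q) = ∫ q in P', q.1 * G q := setIntegral_congr_set haeeq
  have hsymmval : ∀ q : ℝ × ℝ,
      Complex.polarCoord.symm q = (q.1:ℂ) * Complex.exp ((q.2:ℂ)*I) := by
    intro q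
    rw [Complex.polarCoord_symm_apply, exp_mul_I_eq]
  set E := Complex.polarCoord.symm '' P' with hE
  have hEopen : IsOpen E :=
    Complex.polarCoord.symm.isOpen_image_of_subset_source (isOpen_Ioo.prod isOpen_Ioo)
      (by rw [Complex.polarCoord.symm_source]; exact hP'sub)
  have hinj : Set.InjOn Complex.polarCoord.symm Complex.polarCoord.target :=
    Complex.polarCoord.symm.injOn
  have h4c : (∫ q in P', q.1 * G q) = ∫ w in E, u w := by
    have hv : ∀ q ∈ Complex.polarCoord.target,
        Set.indicator P' (fun q : ℝ × ℝ => q.1 * G q) q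
          = q.1 • (Set.indicator E u) (Complex.polarCoord.symm q) := by
      intro q hq
      by_cases hq' : q ∈ P'
      · rw [Set.indicator_of_mem hq', Set.indicator_of_mem (Set.mem_image_of_mem _ hq'),
          smul_eq_mul]
        congr 1
        rw [hu]
        simp only
        rw [hsymmval]
      · rw [Set.indicator_of_notMem hq', Set.indicator_of_notMem, smul_zero]
        intro hmem
        obtain ⟨q', hq'P, hq'eq⟩ := hmem
        exact hq' (hinj (hP'sub hq'P) hq hq'eq ▸ hq'P)
    calc (∫ q in P', q.1 * G q)
        = ∫ q in Complex.polarCoord.target, Set.indicator P' (fun q : ℝ × ℝ => q.1 * G q) q := by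
          rw [setIntegral_indicator (isOpen_Ioo.prod isOpen_Ioo).measurableSet,
            Set.inter_eq_self_of_subset_right hP'sub]
      _ = ∫ q in Complex.polarCoord.target, q.1 • (Set.indicator E u) (Complex.polarCoord.symm q) :=
          setIntegral_congr_fun Complex.polarCoord.open_target.measurableSet hv
      _ = ∫ w, Set.indicator E u w := Complex.integral_comp_polarCoord_symm _
      _ = ∫ w in E, u w := integral_indicator hEopen.measurableSet
  have hE_ball : E ⊆ Metric.closedBall 0 R := by
    rintro w ⟨q, hq, rfl⟩
    rw [Metric.mem_closedBall, dist_zero_right,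
      Complex.norm_polarCoord_symm, abs_of_pos (lt_trans (half_pos hR) hq.1.1)]
    exact hq.1.2.le
  have huint : IntegrableOn u E := by
    apply IntegrableOn.mono_set ?_ hE_ball
    apply ContinuousOn.integrableOn_compact (isCompact_closedBall 0 R)
    apply ContinuousOn.norm
    apply hUcont.comp (continuous_const.add continuous_id).continuousOn
    intro w hw
    exact hball_im w (by rwa [Metric.mem_closedBall, dist_zero_right] at hw)
  -- step 5: to lintegral and Fubini
  have h5 : ENNReal.ofReal (∫ w in E, u w) = ∫⁻ w in E, ENNReal.ofReal ‖U (c + w)‖ :=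
    ofReal_integral_eq_lintegral_ofReal huint (Filter.Eventually.of_forall fun w => norm_nonneg _)
  have htrans : (∫⁻ w in E, ENNReal.ofReal ‖U (c + w)‖)
      = ∫⁻ z in (fun w => c + w) '' E, ENNReal.ofReal ‖U z‖ :=
    (measurePreserving_add_left volume c).setLIntegral_comp_emb
      (Homeomorph.measurableEmbedding (Homeomorph.addLeft c))
      (fun z => ENNReal.ofReal ‖U z‖) E
  set A' := Set.Icc (c.re - R) (c.re + R) with hA'
  set B' := Set.Icc (c.im - R) (c.im + R) with hB'
  set Q := Complex.measurableEquivRealProd ⁻¹' (A' ×ˢ B') with hQ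
  have hQsub : (fun w => c + w) '' E ⊆ Q := by
    rintro z ⟨w, hw, rfl⟩
    have habs : ‖w‖ ≤ R := by
      have := hE_ball hw
      rwa [Metric.mem_closedBall, dist_zero_right] at this
    have hre := abs_le.1 (le_trans (Complex.abs_re_le_norm w) habs)
    have him := abs_le.1 (le_trans (Complex.abs_im_le_norm w) habs)
    simp only [hQ, Set.mem_preimage, Complex.measurableEquivRealProd_apply, Set.mem_prod,
      Set.mem_Icc, Complex.add_re, Complex.add_im, hA', hB']
    refine ⟨⟨by linarith, by linarith⟩, ⟨by linarith, by linarith⟩⟩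
  have h6 : (∫⁻ z in (fun w => c + w) '' E, ENNReal.ofReal ‖U z‖)
      ≤ ∫⁻ z in Q, ENNReal.ofReal ‖U z‖ := lintegral_mono_set hQsub
  have h7 : (∫⁻ z in Q, ENNReal.ofReal ‖U z‖)
      ≤ ∫⁻ z in Q, (1 + (ENNReal.ofReal (‖U z‖)) ^ (p z.re)) := by
    refine lintegral_mono fun z => ?_
    show ENNReal.ofReal ‖U z‖ ≤ 1 + ENNReal.ofReal (‖U z‖) ^ p z.re
    exact ofReal_le_one_add_rpow (le_trans ha.le (hab z.re).1)
  have hQvol : volume Q = ENNReal.ofReal (2*R) * ENNReal.ofReal (2*R) := by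
    rw [hQ, Complex.volume_preserving_equiv_real_prod.measure_preimage
      (measurableSet_Icc.prod measurableSet_Icc).nullMeasurableSet]
    rw [Measure.volume_eq_prod, Measure.prod_prod, Real.volume_Icc, Real.volume_Icc]
    congr 1 <;> · congr 1; ring
  have h8 : (∫⁻ z in Q, (1 + (ENNReal.ofReal (‖U z‖)) ^ (p z.re)))
      = volume Q + ∫⁻ z in Q, (ENNReal.ofReal (‖U z‖)) ^ (p z.re) := by
    rw [lintegral_add_left measurable_const, setLIntegral_const, one_mul]
  set V : ℝ × ℝ → ℝ≥0∞ :=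
    fun q => (ENNReal.ofReal (‖U ((q.1:ℂ) + (q.2:ℂ)*I)‖)) ^ (p q.1) with hV
  have h9 : (∫⁻ z in Q, (ENNReal.ofReal (‖U z‖)) ^ (p z.re))
      = ∫⁻ q in A' ×ˢ B', V q := by
    have h9a : ∀ z : ℂ, (ENNReal.ofReal (‖U z‖)) ^ (p z.re)
        = V (Complex.measurableEquivRealProd z) := by
      intro z
      rw [hV]
      simp only [Complex.measurableEquivRealProd_apply]
      rw [Complex.re_add_im]
    simp_rw [h9a]
    rw [Complex.volume_preserving_equiv_real_prod.setLIntegral_comp_emb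
      Complex.measurableEquivRealProd.measurableEmbedding V Q]
    congr 1
    rw [hQ, Set.image_preimage_eq _ Complex.measurableEquivRealProd.surjective]
  have hVmeas : AEMeasurable V ((volume.restrict A').prod (volume.restrict B')) := by
    rw [Measure.prod_restrict, ← Measure.volume_eq_prod]
    have hUm : AEMeasurable (fun q : ℝ × ℝ => ‖U ((q.1:ℂ) + (q.2:ℂ)*I)‖)
        (volume.restrict (A' ×ˢ B')) := by
      apply ContinuousOn.aemeasurable ?_ (measurableSet_Icc.prod measurableSet_Icc)
      apply continuous_norm.comp_continuousOn
      apply hUcont.comp ((Complex.continuous_ofReal.comp continuous_fst).add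
        ((Complex.continuous_ofReal.comp continuous_snd).mul continuous_const)).continuousOn
      intro q hq
      have himq : ((q.1:ℂ) + (q.2:ℂ)*I).im = q.2 := by simp
      rw [Set.mem_setOf_eq]
      show (0:ℝ) < (((q.1:ℂ) + (q.2:ℂ)*I)).im
      rw [himq]
      have h2 : c.im - R ≤ q.2 := hq.2.1
      linarith
    exact (ENNReal.measurable_ofReal.comp_aemeasurable hUm).pow
      ((hmeas.comp measurable_fst).aemeasurable)
  have h10 : (∫⁻ q in A' ×ˢ B', V q) ≤ ENNReal.ofReal (2*R) * S := by
    rw [show (volume : Measure (ℝ×ℝ)).restrict (A' ×ˢ B')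
        = (volume.restrict A').prod (volume.restrict B') by
      rw [Measure.prod_restrict, ← Measure.volume_eq_prod]]
    rw [lintegral_prod_symm V hVmeas]
    calc (∫⁻ y in B', ∫⁻ x in A', V (x, y))
        ≤ ∫⁻ _ in B', S := by
          apply lintegral_mono_ae
          filter_upwards [ae_restrict_mem measurableSet_Icc] with y hy
          calc (∫⁻ x in A', V (x, y)) ≤ ∫⁻ x, V (x, y) := setLIntegral_le_lintegral _ _
            _ ≤ S := by
                have hypos : 0 < y := by
                  have h2 : c.im - R ≤ y := hy.1
                  linarith
                exact hbd y hypos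
      _ = ENNReal.ofReal (2*R) * S := by
          rw [setLIntegral_const, hB', Real.volume_Icc,
            show c.im + R - (c.im - R) = 2*R by ring, mul_comm]
  -- combine
  have hTne : (ENNReal.ofReal (2*R) * ENNReal.ofReal (2*R) + ENNReal.ofReal (2*R) * S) ≠ ⊤ :=
    ENNReal.add_ne_top.2 ⟨ENNReal.mul_ne_top ENNReal.ofReal_ne_top ENNReal.ofReal_ne_top,
      ENNReal.mul_ne_top ENNReal.ofReal_ne_top hS⟩
  have hchain : ENNReal.ofReal (∫ w in E, u w)
      ≤ ENNReal.ofReal (2*R) * ENNReal.ofReal (2*R) + ENNReal.ofReal (2*R) * S := by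
    rw [h5, htrans]
    calc (∫⁻ z in (fun w => c + w) '' E, ENNReal.ofReal ‖U z‖)
        ≤ ∫⁻ z in Q, ENNReal.ofReal ‖U z‖ := h6
      _ ≤ ∫⁻ z in Q, (1 + (ENNReal.ofReal (‖U z‖)) ^ (p z.re)) := h7
      _ = volume Q + ∫⁻ z in Q, (ENNReal.ofReal (‖U z‖)) ^ (p z.re) := h8
      _ = ENNReal.ofReal (2*R) * ENNReal.ofReal (2*R) + ∫⁻ q in A' ×ˢ B', V q := by
          rw [hQvol, h9]
      _ ≤ ENNReal.ofReal (2*R) * ENNReal.ofReal (2*R) + ENNReal.ofReal (2*R) * S :=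
          add_le_add_right h10 _
  have hint_le : (∫ w in E, u w)
      ≤ (ENNReal.ofReal (2*R) * ENNReal.ofReal (2*R) + ENNReal.ofReal (2*R) * S).toReal := by
    have h11 := ENNReal.toReal_mono hTne hchain
    rwa [ENNReal.toReal_ofReal (setIntegral_nonneg hEopen.measurableSet
      (fun w _ => norm_nonneg _))] at h11
  calc Real.pi * R * ‖U c‖ = (R/2) * (2*Real.pi * ‖U c‖) := by ring
    _ ≤ ∫ r in D, ∫ θ in Θ, G (r, θ) := h1
    _ = ∫ q in D ×ˢ Θ, G q := h2
    _ ≤ (2/R) * ∫ q in D ×ˢ Θ, q.1 * G q := h3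
    _ = (2/R) * ∫ w in E, u w := by rw [h4a, h4c]
    _ ≤ (2/R) * (ENNReal.ofReal (2*R) * ENNReal.ofReal (2*R)
          + ENNReal.ofReal (2*R) * S).toReal :=
        mul_le_mul_of_nonneg_left hint_le (by positivity)

/-- let `p : ℝ → (1,∞)` be measurable, in the class `LH`, with
`1 < p⁻ ≤ p⁺ < ∞`. If `U` is harmonic on the upper half-plane and
`sup_{y>0} ∫_ℝ |U(x+iy)|^{p(x)} dx < ∞`, then for every `k > 0`, `U` is bounded on the
closed half-plane `{z : Im z ≥ k}`. -/
theorem stmt14 (p : ℝ → ℝ) (hmeas : Measurable p)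
    (hlog : ∃ Clog : ℝ, 0 < Clog ∧ ∀ x y : ℝ, 0 < |x - y| → |x - y| < 1/2 →
      |p x - p y| ≤ Clog / Real.log (1/|x - y|))
    (hinf : ∃ pinf Cinf : ℝ, 0 < Cinf ∧ ∀ x : ℝ,
      |p x - pinf| ≤ Cinf / Real.log (Real.exp 1 + |x|))
    (hbounds : ∃ a b : ℝ, 1 < a ∧ ∀ x : ℝ, a ≤ p x ∧ p x ≤ b)
    (U : ℂ → ℂ) (hU : HarmonicOnSet U {z : ℂ | 0 < z.im})
    (hnorm : (⨆ y ∈ Set.Ioi (0:ℝ),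
      ∫⁻ x : ℝ, ENNReal.ofReal (‖U (x + y * Complex.I)‖) ^ (p x)) < ⊤) :
    ∀ k : ℝ, 0 < k → ∃ B : ℝ, 0 < B ∧
      ∀ z : ℂ, k ≤ z.im → ‖U z‖ ≤ B := by
  obtain ⟨a, b, ha, hab⟩ := hbounds
  intro k hk
  set R := k/2 with hRdef
  have hR : 0 < R := by positivity
  set S := (⨆ y ∈ Set.Ioi (0:ℝ),
    ∫⁻ x : ℝ, ENNReal.ofReal (‖U (x + y * Complex.I)‖) ^ (p x)) with hSdef
  have hS : S ≠ ⊤ := hnorm.ne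
  have hbd : ∀ y : ℝ, 0 < y →
      (∫⁻ x : ℝ, ENNReal.ofReal (‖U ((x:ℂ) + (y:ℂ) * I)‖) ^ (p x)) ≤ S := by
    intro y hy
    exact le_biSup
      (fun y : ℝ => ∫⁻ x : ℝ, ENNReal.ofReal (‖U ((x:ℂ) + (y:ℂ) * I)‖) ^ (p x)) hy
  set T := (ENNReal.ofReal (2*R) * ENNReal.ofReal (2*R) + ENNReal.ofReal (2*R) * S) with hT
  refine ⟨max 1 ((2/R) * T.toReal / (Real.pi * R)),
    lt_of_lt_of_le zero_lt_one (le_max_left _ _), ?_⟩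
  intro z hz
  have hcim : 2*R ≤ z.im := by rw [hRdef]; linarith
  have hmb := main_bound p hmeas ha hab U hU S hS hbd hR hcim
  refine le_max_of_le_right ?_
  rw [le_div_iff₀ (by positivity : (0:ℝ) < Real.pi * R)]
  have harith : Real.pi * R * ‖U z‖ = ‖U z‖ * (Real.pi * R) := by ring
  rw [← harith]
  exact hmb
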